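/- Let γ be continuously differentiable with γ' > 0 on [0,∞) and sup γ = +∞, and let φ be differentiable, non-increasing with φ'(0) < 0 and inf φ = 0. Then the Gamma-Phi loss L_y(v) = γ(Σ_{j ≠ y} φ(v_y − v_j)) is classification-calibrated: for all p ∈ Δ^k and all y with p_y < max_j p_j, one has C_p^* < inf{ C_p(v) : v ∈ R^k, v_y = max_j v_j }. -/

import Mathlib

/-- The `y`-th component of the Gamma-Phi loss associated to `γ` and `φ`. -/
noncomputable def gammaPhiLoss {k : ℕ} (γ φ : ℝ → ℝ) (v : Fin k → ℝ) (y : Fin k) : ℝ :=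
  γ (∑ j ∈ Finset.univ.erase y, φ (v y - v j))

/-- The conditional risk of the Gamma-Phi loss at `p`. -/
noncomputable def condRisk {k : ℕ} (γ φ : ℝ → ℝ) (p v : Fin k → ℝ) : ℝ :=
  ∑ y, p y * gammaPhiLoss γ φ v y

open Filter Topology Finset

/-! ### Auxiliary definitions and lemmas -/

/-- The argument of `γ` in the Gamma-Phi loss. -/
noncomputable def gpArg (φ : ℝ → ℝ) {k : ℕ} (v : Fin k → ℝ) (m : Fin k) : ℝ :=
  ∑ i ∈ Finset.univ.erase m, φ (v m - v i)

lemma gammaPhiLoss_eq {k : ℕ} (γ φ : ℝ → ℝ) (v : Fin k → ℝ) (m : Fin k) :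
    gammaPhiLoss γ φ v m = γ (gpArg φ v m) := rfl

lemma condRisk_eq {k : ℕ} (γ φ : ℝ → ℝ) (p v : Fin k → ℝ) :
    condRisk γ φ p v = ∑ m, p m * γ (gpArg φ v m) := rfl

lemma gpArg_nonneg {k : ℕ} (φ : ℝ → ℝ) (hφ0 : ∀ x, 0 ≤ φ x) (v : Fin k → ℝ) (m : Fin k) :
    0 ≤ gpArg φ v m :=
  Finset.sum_nonneg fun i _ => hφ0 _

lemma gpArg_split {k : ℕ} (φ : ℝ → ℝ) (v : Fin k → ℝ) {m m' : Fin k} (h : m' ≠ m) :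
    gpArg φ v m = φ (v m - v m') + ∑ i ∈ (Finset.univ.erase m).erase m', φ (v m - v i) := by
  rw [gpArg, ← Finset.add_sum_erase _ _ (Finset.mem_erase.2 ⟨h, Finset.mem_univ m'⟩)]

lemma gammaPhiLoss_comp_perm {k : ℕ} (γ φ : ℝ → ℝ) (v : Fin k → ℝ) (e : Equiv.Perm (Fin k))
    (m : Fin k) : gammaPhiLoss γ φ (v ∘ e) m = gammaPhiLoss γ φ v (e m) := by
  unfold gammaPhiLoss
  congr 1
  refine Finset.sum_equiv e (fun i => ?_) (fun i _ => ?_)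
  · simp [Finset.mem_erase, EmbeddingLike.apply_eq_iff_eq]
  · simp

lemma condRisk_comp_swap {k : ℕ} (γ φ : ℝ → ℝ) (p v : Fin k → ℝ) (y j : Fin k) (hyj : y ≠ j) :
    condRisk γ φ p (v ∘ Equiv.swap y j) =
      condRisk γ φ p v - (p j - p y) * (gammaPhiLoss γ φ v j - gammaPhiLoss γ φ v y) := by
  classical
  have h1 : ∀ m, gammaPhiLoss γ φ (v ∘ Equiv.swap y j) m
      = gammaPhiLoss γ φ v (Equiv.swap y j m) := fun m =>
    gammaPhiLoss_comp_perm γ φ v (Equiv.swap y j) m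
  have h2 : condRisk γ φ p (v ∘ Equiv.swap y j)
      = ∑ m, p (Equiv.swap y j m) * gammaPhiLoss γ φ v m := by
    rw [condRisk]
    simp_rw [h1]
    have := Equiv.sum_comp (Equiv.swap y j)
      (fun m => p (Equiv.swap y j m) * gammaPhiLoss γ φ v m)
    rw [← this]
    refine Finset.sum_congr rfl fun m _ => ?_
    rw [Equiv.swap_apply_self]
  rw [h2, condRisk]
  have h3 : ∑ m, p (Equiv.swap y j m) * gammaPhiLoss γ φ v m
      = (∑ m, p m * gammaPhiLoss γ φ v m)
        + ∑ m, (p (Equiv.swap y j m) - p m) * gammaPhiLoss γ φ v m := by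
    rw [← Finset.sum_add_distrib]
    refine Finset.sum_congr rfl fun m _ => by ring
  rw [h3]
  have h4 : ∑ m, (p (Equiv.swap y j m) - p m) * gammaPhiLoss γ φ v m
      = ∑ m ∈ ({y, j} : Finset (Fin k)), (p (Equiv.swap y j m) - p m) * gammaPhiLoss γ φ v m := by
    refine (Finset.sum_subset (Finset.subset_univ _) fun m _ hm => ?_).symm
    have hmy : m ≠ y := fun h => hm (by simp [h])
    have hmj : m ≠ j := fun h => hm (by simp [h])
    rw [Equiv.swap_apply_of_ne_of_ne hmy hmj]
    ring
  rw [h4, Finset.sum_pair hyj, Equiv.swap_apply_left, Equiv.swap_apply_right]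
  ring

lemma gp_deriv_lower {γ : ℝ → ℝ} (hγC1 : ContDiff ℝ 1 γ)
    (hγ' : ∀ x ≥ (0 : ℝ), 0 < deriv γ x) {N : ℝ} (hN : 0 ≤ N) :
    ∃ c > 0, ∀ a b : ℝ, 0 ≤ a → a ≤ b → b ≤ N → c * (b - a) ≤ γ b - γ a := by
  have hγd : Differentiable ℝ γ := hγC1.differentiable one_ne_zero
  have hdc : Continuous (deriv γ) := hγC1.continuous_deriv le_rfl
  obtain ⟨x₀, hx₀mem, hx₀min⟩ :=
    isCompact_Icc.exists_isMinOn (Set.nonempty_Icc.2 hN) hdc.continuousOn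
  refine ⟨deriv γ x₀, hγ' x₀ hx₀mem.1, fun a b ha hab hbN => ?_⟩
  have hmono : MonotoneOn (fun x => γ x - deriv γ x₀ * x) (Set.Icc 0 N) := by
    refine monotoneOn_of_deriv_nonneg (convex_Icc 0 N)
      ((hγd.continuous.sub (continuous_const.mul continuous_id)).continuousOn)
      ((hγd.sub (differentiable_id.const_mul _)).differentiableOn) (fun x hx => ?_)
    rw [interior_Icc] at hx
    have hds : HasDerivAt (fun x => γ x - deriv γ x₀ * x) (deriv γ x - deriv γ x₀ * 1) x :=
      (hγd x).hasDerivAt.sub ((hasDerivAt_id x).const_mul _)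
    rw [hds.deriv, mul_one, sub_nonneg]
    exact isMinOn_iff.1 hx₀min x ⟨hx.1.le, hx.2.le⟩
  have h := hmono (Set.mem_Icc.2 ⟨ha, hab.trans hbN⟩) (Set.mem_Icc.2 ⟨ha.trans hab, hbN⟩) hab
  dsimp at h
  linarith

lemma gp_deriv_upper {γ : ℝ → ℝ} (hγC1 : ContDiff ℝ 1 γ)
    (hγ' : ∀ x ≥ (0 : ℝ), 0 < deriv γ x) {N : ℝ} (hN : 0 ≤ N) :
    ∃ K > 0, ∀ a b : ℝ, 0 ≤ a → a ≤ b → b ≤ N → γ b - γ a ≤ K * (b - a) := by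
  have hγd : Differentiable ℝ γ := hγC1.differentiable one_ne_zero
  have hdc : Continuous (deriv γ) := hγC1.continuous_deriv le_rfl
  obtain ⟨x₀, hx₀mem, hx₀max⟩ :=
    isCompact_Icc.exists_isMaxOn (Set.nonempty_Icc.2 hN) hdc.continuousOn
  refine ⟨deriv γ x₀, hγ' x₀ hx₀mem.1, fun a b ha hab hbN => ?_⟩
  have hmono : MonotoneOn (fun x => deriv γ x₀ * x - γ x) (Set.Icc 0 N) := by
    refine monotoneOn_of_deriv_nonneg (convex_Icc 0 N)
      (((continuous_const.mul continuous_id).sub hγd.continuous).continuousOn)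
      (((differentiable_id.const_mul _).sub hγd).differentiableOn) (fun x hx => ?_)
    rw [interior_Icc] at hx
    have hds : HasDerivAt (fun x => deriv γ x₀ * x - γ x) (deriv γ x₀ * 1 - deriv γ x) x :=
      ((hasDerivAt_id x).const_mul _).sub (hγd x).hasDerivAt
    rw [hds.deriv, mul_one, sub_nonneg]
    exact isMaxOn_iff.1 hx₀max x ⟨hx.1.le, hx.2.le⟩
  have h := hmono (Set.mem_Icc.2 ⟨ha, hab.trans hbN⟩) (Set.mem_Icc.2 ⟨ha.trans hab, hbN⟩) hab
  dsimp at h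
  linarith

lemma gp_exists_small_drop {φ : ℝ → ℝ} (hφdiff : Differentiable ℝ φ) (hφ'0 : deriv φ 0 < 0) :
    ∀ ε > (0:ℝ), ∃ x, 0 < x ∧ x < ε ∧ φ x < φ 0 := by
  intro ε hε
  have hs : Tendsto (slope φ 0) (𝓝[≠] (0:ℝ)) (𝓝 (deriv φ 0)) :=
    hasDerivAt_iff_tendsto_slope.1 (hφdiff 0).hasDerivAt
  have hneg : ∀ᶠ x in 𝓝[≠] (0:ℝ), slope φ 0 x < 0 := hs.eventually_lt_const hφ'0
  have hsub : 𝓝[>] (0:ℝ) ≤ 𝓝[≠] (0:ℝ) :=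
    nhdsWithin_mono 0 (fun x hx => ne_of_gt hx)
  have h2 : ∀ᶠ x in 𝓝[>] (0:ℝ), slope φ 0 x < 0 := hneg.filter_mono hsub
  have h3 : ∀ᶠ x in 𝓝[>] (0:ℝ), x < ε :=
    Filter.eventually_of_mem (Ioo_mem_nhdsGT hε) (fun x hx => hx.2)
  have h4 : ∀ᶠ x in 𝓝[>] (0:ℝ), 0 < x :=
    Filter.eventually_of_mem self_mem_nhdsWithin (fun x hx => hx)
  obtain ⟨x, ⟨hx2, hx3⟩, hx4⟩ := ((h2.and h3).and h4).exists
  refine ⟨x, hx4, hx3, ?_⟩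
  rw [slope_def_field] at hx2
  have hx0 : (0:ℝ) < x - 0 := by linarith
  rw [div_lt_iff₀ hx0] at hx2
  linarith

lemma gp_phi_diff_tendsto_zero {φ : ℝ → ℝ} (hφant : Antitone φ)
    (hbdd : BddAbove (Set.range φ)) (d : ℝ) {X : ℕ → ℝ} (hX : Tendsto X atTop atBot) :
    Tendsto (fun n => φ (X n + d) - φ (X n)) atTop (𝓝 0) := by
  have hmono : Monotone (fun x : ℝ => φ (-x)) := fun x x' h => hφant (neg_le_neg h)
  have hrange : Set.range (fun x : ℝ => φ (-x)) = Set.range φ :=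
    Function.Surjective.range_comp neg_surjective φ
  have hlim : Tendsto (fun x : ℝ => φ (-x)) atTop (𝓝 (⨆ x : ℝ, φ (-x))) :=
    tendsto_atTop_ciSup hmono (hrange ▸ hbdd)
  have hφbot : Tendsto φ atBot (𝓝 (⨆ x : ℝ, φ (-x))) := by
    have := hlim.comp tendsto_neg_atBot_atTop
    simpa [Function.comp_def] using this
  have h1 : Tendsto (fun n => φ (X n + d)) atTop (𝓝 (⨆ x : ℝ, φ (-x))) := by
    refine hφbot.comp ?_
    exact tendsto_atBot_add_const_right _ d hX
  have h2 : Tendsto (fun n => φ (X n)) atTop (𝓝 (⨆ x : ℝ, φ (-x))) := hφbot.comp hX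
  simpa using h1.sub h2

lemma gp_phi_unbounded {φ : ℝ → ℝ} (hφant : Antitone φ)
    (hbdd : ¬ BddAbove (Set.range φ)) : Tendsto φ atBot atTop := by
  have hmono : Monotone (fun x : ℝ => φ (-x)) := fun x x' h => hφant (neg_le_neg h)
  have hrange : Set.range (fun x : ℝ => φ (-x)) = Set.range φ :=
    Function.Surjective.range_comp neg_surjective φ
  have h1 : Tendsto (fun x : ℝ => φ (-x)) atTop atTop :=
    tendsto_atTop_atTop_of_monotone' hmono (hrange ▸ hbdd)
  have := h1.comp tendsto_neg_atBot_atTop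
  simpa [Function.comp_def] using this

set_option maxHeartbeats 1600000 in
/-- Main theorem: a Gamma-Phi loss with `γ` continuously differentiable, `γ' > 0` on
`[0,∞)`, `sup γ = +∞`, and `φ` nonnegative, differentiable, non-increasing with
`φ'(0) < 0` and `inf φ = 0`, is classification-calibrated. -/
theorem gammaPhi_classification_calibrated {k : ℕ} (hk : 2 ≤ k) (γ φ : ℝ → ℝ)
    (hγ0 : ∀ x ≥ (0 : ℝ), 0 ≤ γ x)
    (hγC1 : ContDiff ℝ 1 γ) (hγ' : ∀ x ≥ (0 : ℝ), 0 < deriv γ x)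
    (hγsup : ¬ BddAbove (γ '' Set.Ici 0))
    (hφ0 : ∀ x, 0 ≤ φ x) (hφdiff : Differentiable ℝ φ)
    (hφ' : ∀ x, deriv φ x ≤ 0) (hφ'0 : deriv φ 0 < 0)
    (hφinf : ⨅ x : ℝ, φ x = 0) :
    ∀ p : Fin k → ℝ, (∀ j, 0 ≤ p j) → (∑ j, p j = 1) →
      ∀ y : Fin k, (∃ j, p y < p j) →
        (⨅ v : Fin k → ℝ, condRisk γ φ p v) <
          sInf {c | ∃ v : Fin k → ℝ, (∀ j, v j ≤ v y) ∧ c = condRisk γ φ p v} := by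
  intro p hp0 hp1 y hy
  classical
  obtain ⟨j, hpyj⟩ := hy
  have hyj : y ≠ j := by rintro rfl; exact lt_irrefl _ hpyj
  have hpj : 0 < p j := lt_of_le_of_lt (hp0 y) hpyj
  -- basic consequences of the hypotheses
  have hγd : Differentiable ℝ γ := hγC1.differentiable one_ne_zero
  have hγc : Continuous γ := hγd.continuous
  have hφant : Antitone φ := antitone_of_deriv_nonpos hφdiff hφ'
  have hφc : Continuous φ := hφdiff.continuous
  have hγSM : StrictMonoOn γ (Set.Ici 0) := by
    refine strictMonoOn_of_deriv_pos (convex_Ici 0) hγc.continuousOn (fun x hx => ?_)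
    rw [interior_Ici] at hx
    exact hγ' x hx.le
  have hφtop : Tendsto φ atTop (𝓝 0) := by
    have := tendsto_atTop_ciInf hφant ⟨0, fun x hx => by obtain ⟨u, rfl⟩ := hx; exact hφ0 u⟩
    rwa [hφinf] at this
  have hCnn : ∀ u : Fin k → ℝ, 0 ≤ condRisk γ φ p u := by
    intro u
    rw [condRisk_eq]
    exact Finset.sum_nonneg fun m _ => mul_nonneg (hp0 m) (hγ0 _ (gpArg_nonneg φ hφ0 u m))
  set SS : Set ℝ := {c | ∃ v : Fin k → ℝ, (∀ j, v j ≤ v y) ∧ c = condRisk γ φ p v} with hSS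
  have hSSne : SS.Nonempty := ⟨condRisk γ φ p (fun _ => 0), fun _ => 0, fun _ => le_rfl, rfl⟩
  by_contra hcon
  push_neg at hcon
  set B : ℝ := sInf SS with hB
  have hBle : ∀ u : Fin k → ℝ, B ≤ condRisk γ φ p u := by
    intro u
    refine le_trans hcon (ciInf_le ⟨0, ?_⟩ u)
    rintro x ⟨u', rfl⟩
    exact hCnn u'
  -- a near-optimal constrained sequence
  have hseq : ∀ n : ℕ, ∃ u : Fin k → ℝ, (∀ i, u i ≤ u y) ∧
      condRisk γ φ p u < B + 1 / ((n : ℝ) + 1) := by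
    intro n
    obtain ⟨c, hc, hlt⟩ := Real.lt_sInf_add_pos hSSne
      (by positivity : (0:ℝ) < 1 / ((n : ℝ) + 1))
    obtain ⟨u, huS, rfl⟩ := hc
    exact ⟨u, huS, hlt⟩
  choose v hvS hvB using hseq
  have hvB1 : ∀ n, condRisk γ φ p (v n) ≤ B + 1 := by
    intro n
    have h1 : 1 / ((n : ℝ) + 1) ≤ 1 := by
      rw [div_le_one (by positivity)]
      have : (0:ℝ) ≤ (n:ℝ) := Nat.cast_nonneg n
      linarith
    linarith [hvB n]
  -- budget bounds
  have hbud : ∀ m : Fin k, 0 < p m → ∃ N, 0 ≤ N ∧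
      ∀ u : Fin k → ℝ, condRisk γ φ p u ≤ B + 1 → gpArg φ u m ≤ N := by
    intro m hm
    obtain ⟨c, hcmem, hcgt⟩ := not_bddAbove_iff.1 hγsup ((B + 1) / p m)
    obtain ⟨N, hN0, rfl⟩ := hcmem
    have hN0' : (0:ℝ) ≤ N := hN0
    refine ⟨N, hN0', fun u hu => ?_⟩
    have h1 : p m * γ (gpArg φ u m) ≤ condRisk γ φ p u := by
      rw [condRisk_eq]
      exact Finset.single_le_sum
        (fun i _ => mul_nonneg (hp0 i) (hγ0 _ (gpArg_nonneg φ hφ0 u i))) (Finset.mem_univ m)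
    have h2 : γ (gpArg φ u m) ≤ (B + 1) / p m := by
      rw [le_div_iff₀ hm]
      nlinarith
    by_contra hgt
    push_neg at hgt
    have h3 := hγSM (Set.mem_Ici.2 hN0') (Set.mem_Ici.2 (hN0'.trans hgt.le)) hgt
    linarith
  -- comparison of the two relevant loss arguments for constrained points
  have hArgLe : ∀ u : Fin k → ℝ, (∀ i, u i ≤ u y) →
      gpArg φ u y ≤ gpArg φ u j ∧ φ 0 - φ (u y - u j) ≤ gpArg φ u j - gpArg φ u y := by
    intro u huS
    have hy' := gpArg_split φ u (show j ≠ y from hyj.symm)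
    have hj' := gpArg_split φ u (show y ≠ j from hyj)
    have hEE : (Finset.univ.erase y).erase j = (Finset.univ.erase j).erase y :=
      Finset.erase_right_comm
    have hsum : ∑ i ∈ (Finset.univ.erase y).erase j, φ (u y - u i)
        ≤ ∑ i ∈ (Finset.univ.erase j).erase y, φ (u j - u i) := by
      rw [hEE]
      exact Finset.sum_le_sum fun i _ =>
        hφant (by linarith [huS j] : u j - u i ≤ u y - u i)
    have hhead : φ (u y - u j) ≤ φ 0 := hφant (by linarith [huS j] : (0:ℝ) ≤ u y - u j)
    have hhead2 : φ 0 ≤ φ (u j - u y) := hφant (by linarith [huS j] : u j - u y ≤ 0)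
    constructor
    · rw [hy', hj']; linarith
    · rw [hy', hj']; linarith
  obtain ⟨Mj, hMj0, hMjA⟩ := hbud j hpj
  obtain ⟨cℓ, hcℓ, hlow⟩ := gp_deriv_lower hγC1 hγ' hMj0
  -- the swap comparison forces the top-two gap to vanish
  have hswap : ∀ n, (p j - p y) * (γ (gpArg φ (v n) j) - γ (gpArg φ (v n) y))
      < 1 / ((n:ℝ)+1) := by
    intro n
    have h1 := hBle ((v n) ∘ Equiv.swap y j)
    have h2 := condRisk_comp_swap γ φ p (v n) y j hyj
    rw [gammaPhiLoss_eq, gammaPhiLoss_eq] at h2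
    have h3 := hvB n
    rw [h2] at h1
    linarith
  set a : ℕ → ℝ := fun n => v n y - v n j with ha
  have ha0 : ∀ n, 0 ≤ a n := fun n => sub_nonneg.2 (hvS n j)
  have hφalb : ∀ n, φ 0 - φ (a n) ≤ 1 / ((n:ℝ)+1) / ((p j - p y) * cℓ) := by
    intro n
    have hA := hArgLe (v n) (hvS n)
    have hAj := hMjA (v n) (hvB1 n)
    have hAy0 : 0 ≤ gpArg φ (v n) y := gpArg_nonneg φ hφ0 (v n) y
    have h4 := hlow _ _ hAy0 hA.1 hAj
    have h5 := hswap n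
    have hpy' : 0 < p j - p y := sub_pos.2 hpyj
    have hpp : 0 < (p j - p y) * cℓ := mul_pos hpy' hcℓ
    rw [le_div_iff₀ hpp]
    nlinarith [hA.2, h4, h5]
  have hφaTo : Tendsto (fun n => φ (a n)) atTop (𝓝 (φ 0)) := by
    have hub : ∀ n, φ (a n) ≤ φ 0 := fun n => hφant (ha0 n)
    have h6 : Tendsto (fun n : ℕ => 1/((n:ℝ)+1) / ((p j - p y)*cℓ)) atTop (𝓝 0) := by
      have := tendsto_one_div_add_atTop_nhds_zero_nat.div_const ((p j - p y)*cℓ)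
      simpa using this
    have hlbt : Tendsto (fun n : ℕ => φ 0 - 1/((n:ℝ)+1) / ((p j - p y)*cℓ)) atTop (𝓝 (φ 0)) := by
      have := h6.const_sub (φ 0)
      simpa using this
    refine tendsto_of_tendsto_of_tendsto_of_le_of_le hlbt tendsto_const_nhds ?_ hub
    intro n
    have := hφalb n
    linarith
  have haTo : Tendsto a atTop (𝓝 0) := by
    rw [tendsto_order]
    constructor
    · intro l hl
      exact Filter.Eventually.of_forall fun n => lt_of_lt_of_le hl (ha0 n)
    · intro u hu
      obtain ⟨x, hx0, hxu, hxdrop⟩ := gp_exists_small_drop hφdiff hφ'0 u hu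
      have hev : ∀ᶠ n in atTop, φ x < φ (a n) := hφaTo.eventually_const_lt hxdrop
      refine hev.mono fun n hn => ?_
      by_contra hge
      push_neg at hge
      exact absurd (hφant (hxu.le.trans hge)) (not_le.2 hn)
  -- extract a subsequence along which all normalized coordinates converge in EReal
  obtain ⟨t, σ, hσ, htt⟩ := CompactSpace.tendsto_subseq
      (fun n => fun m : Fin k => ((v n m - v n y : ℝ) : EReal))
  have hco : ∀ m, Tendsto (fun n => ((v (σ n) m - v (σ n) y : ℝ) : EReal)) atTop (𝓝 (t m)) :=
    fun m => (tendsto_pi_nhds.1 htt) m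
  have hcases : ∀ m, (∃ r : ℝ, Tendsto (fun n => v (σ n) m - v (σ n) y) atTop (𝓝 r)) ∨
      Tendsto (fun n => v (σ n) m - v (σ n) y) atTop atBot := by
    intro m
    have hle : t m ≤ ((0:ℝ) : EReal) := by
      refine le_of_tendsto (hco m) (Filter.Eventually.of_forall fun n => ?_)
      exact EReal.coe_le_coe_iff.2 (sub_nonpos.2 (hvS (σ n) m))
    by_cases hbot : t m = ⊥
    · right
      have hco' := hco m
      rw [hbot] at hco'
      refine tendsto_atBot.2 fun b => ?_
      have := (EReal.tendsto_nhds_bot_iff_real.1 hco') b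
      exact this.mono fun n hn => (EReal.coe_lt_coe_iff.1 hn).le
    · have htop : t m ≠ ⊤ := by
        intro h
        rw [h, top_le_iff] at hle
        exact EReal.coe_ne_top 0 hle
      left
      refine ⟨(t m).toReal, ?_⟩
      have hcoe : ((t m).toReal : EReal) = t m := EReal.coe_toReal htop hbot
      have hco' := hco m
      rw [← hcoe] at hco'
      exact EReal.tendsto_coe.1 hco'
  set P : Fin k → Prop :=
    fun m => ∃ r : ℝ, Tendsto (fun n => v (σ n) m - v (σ n) y) atTop (𝓝 r) with hPdef
  set F : Finset (Fin k) := Finset.univ.filter P with hFdef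
  set τ : Fin k → ℝ := fun m => if h : P m then h.choose else 0 with hτdef
  have hFt : ∀ m ∈ F, Tendsto (fun n => v (σ n) m - v (σ n) y) atTop (𝓝 (τ m)) := by
    intro m hm
    rw [hFdef, Finset.mem_filter] at hm
    have hPm := hm.2
    simp only [hτdef, dif_pos hPm]
    exact hPm.choose_spec
  have hnFt : ∀ m, m ∉ F → Tendsto (fun n => v (σ n) m - v (σ n) y) atTop atBot := by
    intro m hm
    rcases hcases m with h | h
    · exact absurd (by rw [hFdef]; exact Finset.mem_filter.2 ⟨Finset.mem_univ m, h⟩) hm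
    · exact h
  have hyF : y ∈ F := by
    rw [hFdef]
    refine Finset.mem_filter.2 ⟨Finset.mem_univ y, ⟨0, ?_⟩⟩
    simp [sub_self]
  have hτy : τ y = 0 := tendsto_nhds_unique (hFt y hyF) (by simp [sub_self])
  have hdifj : Tendsto (fun n => v (σ n) j - v (σ n) y) atTop (𝓝 0) := by
    have h1 : Tendsto (fun n => a (σ n)) atTop (𝓝 0) := haTo.comp hσ.tendsto_atTop
    have h2 := h1.neg
    rw [neg_zero] at h2
    refine h2.congr fun n => ?_
    simp only [ha]
    ring
  have hjF : j ∈ F := by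
    rw [hFdef]
    exact Finset.mem_filter.2 ⟨Finset.mem_univ j, ⟨0, hdifj⟩⟩
  have hτj : τ j = 0 := tendsto_nhds_unique (hFt j hjF) hdifj
  -- the perturbation direction and limit objects
  set c : Fin k → ℝ := fun i => if i = j then 1 else if i = y then -1 else 0 with hcdef
  have hcy : c y = -1 := by simp [hcdef, hyj]
  have hcj : c j = 1 := by simp [hcdef]
  have hc0 : ∀ i, i ≠ y → i ≠ j → c i = 0 := fun i h1 h2 => by simp [hcdef, h1, h2]
  set q : ℝ → ℕ → Fin k → ℝ := fun s n i => v (σ n) i + c i * s with hqdef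
  set Λ : Fin k → ℝ → ℝ := fun m s => ∑ i ∈ Finset.univ.erase m,
      (if i ∈ F then φ ((τ m - τ i) + (c m - c i) * s) else 0) with hΛdef
  have hΛlim : ∀ (s : ℝ) (m), m ∈ F →
      Tendsto (fun n => gpArg φ (q s n) m) atTop (𝓝 (Λ m s)) := by
    intro s m hm
    have hqd : ∀ n i, q s n m - q s n i
        = ((v (σ n) m - v (σ n) y) - (v (σ n) i - v (σ n) y)) + (c m - c i) * s := by
      intro n i
      simp only [hqdef]
      ring
    have hterm : ∀ i ∈ Finset.univ.erase m, Tendsto (fun n => φ (q s n m - q s n i)) atTop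
        (𝓝 (if i ∈ F then φ ((τ m - τ i) + (c m - c i) * s) else 0)) := by
      intro i _
      by_cases hiF : i ∈ F
      · rw [if_pos hiF]
        have h1 : Tendsto (fun n => ((v (σ n) m - v (σ n) y) - (v (σ n) i - v (σ n) y))
            + (c m - c i) * s) atTop (𝓝 ((τ m - τ i) + (c m - c i) * s)) :=
          ((hFt m hm).sub (hFt i hiF)).add_const _
        have h2 := (hφc.tendsto _).comp h1
        exact h2.congr fun n => (congrArg φ (hqd n i)).symm
      · rw [if_neg hiF]
        have h2 : Tendsto (fun n => -(v (σ n) i - v (σ n) y)) atTop atTop :=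
          tendsto_neg_atBot_atTop.comp (hnFt i hiF)
        have h3 : Tendsto (fun n => (v (σ n) m - v (σ n) y) + (c m - c i) * s) atTop
            (𝓝 (τ m + (c m - c i) * s)) := (hFt m hm).add_const _
        have h4 := h3.add_atTop h2
        have h5 := hφtop.comp h4
        exact h5.congr fun n => congrArg φ (by rw [hqd n i]; ring)
    have h := tendsto_finset_sum (Finset.univ.erase m) hterm
    rw [hΛdef]
    exact h
  -- vanishing of the complementary part
  have hIlim : ∀ (s : ℝ) (m), m ∉ F → Tendsto
      (fun n => p m * (γ (gpArg φ (q s n) m) - γ (gpArg φ (v (σ n)) m))) atTop (𝓝 0) := by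
    intro s m hm
    rcases eq_or_lt_of_le (hp0 m) with hpm | hpm
    · simp only [← hpm, zero_mul]
      exact tendsto_const_nhds
    have hmy : m ≠ y := fun h => hm (h ▸ hyF)
    have hmj : m ≠ j := fun h => hm (h ▸ hjF)
    have hcm : c m = 0 := hc0 m hmy hmj
    obtain ⟨N, hN0, hNA⟩ := hbud m hpm
    have hAw : ∀ n, gpArg φ (v (σ n)) m ≤ N := fun n => hNA _ (hvB1 (σ n))
    by_cases hbdd : BddAbove (Set.range φ)
    · -- bounded case
      have hkey : ∀ i, i ≠ m → Tendsto
          (fun n => φ (v (σ n) m - v (σ n) i - c i * s) - φ (v (σ n) m - v (σ n) i))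
          atTop (𝓝 0) := by
        intro i _
        by_cases hiy : i = y
        · rw [hiy]
          exact (gp_phi_diff_tendsto_zero hφant hbdd (-(c y * s)) (hnFt m hm)).congr
            fun n => by rw [← sub_eq_add_neg]
        by_cases hij : i = j
        · rw [hij]
          have hX : Tendsto (fun n => v (σ n) m - v (σ n) j) atTop atBot := by
            have h2 := hdifj.neg
            rw [neg_zero] at h2
            have h1 := (hnFt m hm).atBot_add h2
            exact h1.congr fun n => by ring
          exact (gp_phi_diff_tendsto_zero hφant hbdd (-(c j * s)) hX).congr
            fun n => by rw [← sub_eq_add_neg]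
        · rw [hc0 i hiy hij]
          simp
      have hdiffA : Tendsto (fun n => gpArg φ (q s n) m - gpArg φ (v (σ n)) m) atTop (𝓝 0) := by
        have hfe : ∀ n, gpArg φ (q s n) m - gpArg φ (v (σ n)) m
            = ∑ i ∈ Finset.univ.erase m,
                (φ (v (σ n) m - v (σ n) i - c i * s) - φ (v (σ n) m - v (σ n) i)) := by
          intro n
          rw [gpArg, gpArg, ← Finset.sum_sub_distrib]
          refine Finset.sum_congr rfl fun i _ => ?_
          congr 2
          simp only [hqdef, hcm]
          ring
        have h := tendsto_finset_sum (Finset.univ.erase m)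
          (fun i hi => hkey i (Finset.mem_erase.1 hi).1)
        have h' : Tendsto (fun n => ∑ i ∈ Finset.univ.erase m,
            (φ (v (σ n) m - v (σ n) i - c i * s) - φ (v (σ n) m - v (σ n) i)))
            atTop (𝓝 0) := by simpa using h
        exact h'.congr fun n => (hfe n).symm
      obtain ⟨K, hK0, hKup⟩ := gp_deriv_upper hγC1 hγ' (show (0:ℝ) ≤ N + 1 by linarith)
      have hev : ∀ᶠ n in atTop, |gpArg φ (q s n) m - gpArg φ (v (σ n)) m| ≤ 1 := by
        have h1 : Tendsto (fun n => |gpArg φ (q s n) m - gpArg φ (v (σ n)) m|) atTop (𝓝 0) := by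
          simpa using hdiffA.abs
        exact (h1.eventually_lt_const zero_lt_one).mono fun n hn => hn.le
      refine squeeze_zero_norm'
        (a := fun n => p m * (K * |gpArg φ (q s n) m - gpArg φ (v (σ n)) m|)) ?_ ?_
      · refine hev.mono fun n hn => ?_
        have hA0 : 0 ≤ gpArg φ (v (σ n)) m := gpArg_nonneg φ hφ0 _ m
        have hA'0 : 0 ≤ gpArg φ (q s n) m := gpArg_nonneg φ hφ0 _ m
        have hAN : gpArg φ (v (σ n)) m ≤ N := hAw n
        have hγMono := hγSM.monotoneOn
        have habs : |γ (gpArg φ (q s n) m) - γ (gpArg φ (v (σ n)) m)|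
            ≤ K * |gpArg φ (q s n) m - gpArg φ (v (σ n)) m| := by
          rcases le_total (gpArg φ (v (σ n)) m) (gpArg φ (q s n) m) with hle | hle
          · have hb : gpArg φ (q s n) m ≤ N + 1 := by
              have := (abs_le.1 hn).2
              linarith
            have h7 := hKup _ _ hA0 hle hb
            have h8 : γ (gpArg φ (v (σ n)) m) ≤ γ (gpArg φ (q s n) m) :=
              hγMono (Set.mem_Ici.2 hA0) (Set.mem_Ici.2 hA'0) hle
            rw [abs_of_nonneg (sub_nonneg.2 h8), abs_of_nonneg (sub_nonneg.2 hle)]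
            exact h7
          · have hb : gpArg φ (v (σ n)) m ≤ N + 1 := by linarith
            have h7 := hKup _ _ hA'0 hle hb
            have h8 : γ (gpArg φ (q s n) m) ≤ γ (gpArg φ (v (σ n)) m) :=
              hγMono (Set.mem_Ici.2 hA'0) (Set.mem_Ici.2 hA0) hle
            rw [abs_sub_comm, abs_of_nonneg (sub_nonneg.2 h8), abs_sub_comm,
              abs_of_nonneg (sub_nonneg.2 hle)]
            exact h7
        calc ‖p m * (γ (gpArg φ (q s n) m) - γ (gpArg φ (v (σ n)) m))‖
            = p m * |γ (gpArg φ (q s n) m) - γ (gpArg φ (v (σ n)) m)| := by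
              rw [Real.norm_eq_abs, abs_mul, abs_of_nonneg (hp0 m)]
          _ ≤ p m * (K * |gpArg φ (q s n) m - gpArg φ (v (σ n)) m|) :=
              mul_le_mul_of_nonneg_left habs (hp0 m)
      · have h9 := (hdiffA.abs.const_mul K).const_mul (p m)
        simpa using h9
    · -- unbounded case: impossible for a positive-weight escaping coordinate
      exfalso
      have h1 : Tendsto (fun n => φ (v (σ n) m - v (σ n) y)) atTop atTop :=
        (gp_phi_unbounded hφant hbdd).comp (hnFt m hm)
      obtain ⟨n, hn⟩ := (h1.eventually (eventually_gt_atTop N)).exists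
      have h2 : φ (v (σ n) m - v (σ n) y) ≤ gpArg φ (v (σ n)) m := by
        unfold gpArg
        exact Finset.single_le_sum (f := fun i => φ (v (σ n) m - v (σ n) i)) (fun i _ => hφ0 _)
          (Finset.mem_erase.2 ⟨Ne.symm hmy, Finset.mem_univ y⟩)
      linarith [hAw n]
  -- the limiting perturbed-risk difference
  set Δ : ℝ → ℝ := fun s => ∑ m ∈ F, p m * (γ (Λ m s) - γ (Λ m 0)) with hΔdef
  have hq0 : ∀ n, q 0 n = v (σ n) := by
    intro n
    funext i
    simp [hqdef]
  have hwlim : ∀ m, m ∈ F → Tendsto (fun n => gpArg φ (v (σ n)) m) atTop (𝓝 (Λ m 0)) := by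
    intro m hm
    exact (hΛlim 0 m hm).congr fun n => by rw [hq0]
  have hDlim : ∀ s, Tendsto (fun n => condRisk γ φ p (q s n) - condRisk γ φ p (v (σ n)))
      atTop (𝓝 (Δ s)) := by
    intro s
    have hid : ∀ n, condRisk γ φ p (q s n) - condRisk γ φ p (v (σ n))
        = (∑ m ∈ F, p m * (γ (gpArg φ (q s n) m) - γ (gpArg φ (v (σ n)) m)))
          + ∑ m ∈ Finset.univ.filter (fun m => ¬ P m),
              p m * (γ (gpArg φ (q s n) m) - γ (gpArg φ (v (σ n)) m)) := by
      intro n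
      have h0 : condRisk γ φ p (q s n) - condRisk γ φ p (v (σ n))
          = ∑ m, p m * (γ (gpArg φ (q s n) m) - γ (gpArg φ (v (σ n)) m)) := by
        rw [condRisk_eq, condRisk_eq, ← Finset.sum_sub_distrib]
        exact Finset.sum_congr rfl fun m _ => (mul_sub _ _ _).symm
      rw [h0, hFdef, Finset.sum_filter_add_sum_filter_not]
    have h1 : Tendsto (fun n => ∑ m ∈ F,
        p m * (γ (gpArg φ (q s n) m) - γ (gpArg φ (v (σ n)) m))) atTop (𝓝 (Δ s)) := by
      rw [hΔdef]
      exact tendsto_finset_sum _ fun m hm =>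
        (((hγc.tendsto _).comp (hΛlim s m hm)).sub ((hγc.tendsto _).comp (hwlim m hm))).const_mul _
    have h2 : Tendsto (fun n => ∑ m ∈ Finset.univ.filter (fun m => ¬ P m),
        p m * (γ (gpArg φ (q s n) m) - γ (gpArg φ (v (σ n)) m))) atTop (𝓝 0) := by
      have h := tendsto_finset_sum (Finset.univ.filter (fun m => ¬ P m))
        (fun m hm => hIlim s m (fun hmem => (Finset.mem_filter.1 hm).2
          (by rw [hFdef] at hmem; exact (Finset.mem_filter.1 hmem).2)))
      simpa using h
    have h3 := h1.add h2
    rw [add_zero] at h3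
    exact h3.congr fun n => (hid n).symm
  have hΔnn : ∀ s, 0 ≤ Δ s := by
    intro s
    have hlb : ∀ n : ℕ, -(1/((n:ℝ)+1)) ≤ condRisk γ φ p (q s n) - condRisk γ φ p (v (σ n)) := by
      intro n
      have h1 := hBle (q s n)
      have h2 := hvB (σ n)
      have h3 : 1/((σ n : ℝ)+1) ≤ 1/((n:ℝ)+1) := by
        have h4 : (n:ℝ) ≤ (σ n : ℝ) := Nat.cast_le.2 hσ.le_apply
        apply one_div_le_one_div_of_le (by positivity)
        linarith
      linarith
    have hlb0 : Tendsto (fun n : ℕ => -(1/((n:ℝ)+1))) atTop (𝓝 0) := by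
      have := (tendsto_one_div_add_atTop_nhds_zero_nat (𝕜 := ℝ)).neg
      simpa using this
    exact le_of_tendsto_of_tendsto' hlb0 (hDlim s) hlb
  -- derivative of Δ at 0
  set Λd : Fin k → ℝ := fun m => ∑ i ∈ Finset.univ.erase m,
      (if i ∈ F then deriv φ (τ m - τ i) * (c m - c i) else 0) with hΛddef
  have hder : ∀ m, m ∈ F → HasDerivAt (fun s => Λ m s) (Λd m) 0 := by
    intro m _
    simp only [hΛdef, hΛddef]
    refine HasDerivAt.fun_sum fun i _ => ?_
    by_cases hiF : i ∈ F
    · simp only [if_pos hiF]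
      have h1 : HasDerivAt (fun s : ℝ => (τ m - τ i) + (c m - c i) * s) (c m - c i) 0 := by
        simpa using ((hasDerivAt_id (0:ℝ)).const_mul (c m - c i)).const_add (τ m - τ i)
      have h2 := HasDerivAt.comp (0:ℝ)
        ((hφdiff ((τ m - τ i) + (c m - c i) * 0)).hasDerivAt) h1
      simpa [Function.comp_def] using h2
    · simp only [if_neg hiF]
      exact hasDerivAt_const 0 0
  have hΔder : HasDerivAt Δ (∑ m ∈ F, p m * (deriv γ (Λ m 0) * Λd m)) 0 := by
    simp only [hΔdef]
    refine HasDerivAt.fun_sum fun m hm => ?_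
    have h1 := HasDerivAt.comp (0:ℝ) ((hγd (Λ m 0)).hasDerivAt) (hder m hm)
    have h2 := (h1.sub_const (γ (Λ m 0))).const_mul (p m)
    simpa [Function.comp_def] using h2
  have hΔz : Δ 0 = 0 := by simp [hΔdef]
  have hmin : IsLocalMin Δ 0 := by
    refine Filter.Eventually.of_forall fun s => ?_
    rw [hΔz]
    exact hΔnn s
  have hD0 := hmin.hasDerivAt_eq_zero hΔder
  -- computing the derivative: it is strictly negative, contradiction
  have hΛd0 : ∀ m, m ∈ F → m ≠ y → m ≠ j → Λd m = 0 := by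
    intro m _ hmy hmj
    have hcm : c m = 0 := hc0 m hmy hmj
    have hjmem : j ∈ Finset.univ.erase m := Finset.mem_erase.2 ⟨Ne.symm hmj, Finset.mem_univ j⟩
    have hymem : y ∈ (Finset.univ.erase m).erase j :=
      Finset.mem_erase.2 ⟨hyj, Finset.mem_erase.2 ⟨Ne.symm hmy, Finset.mem_univ y⟩⟩
    simp only [hΛddef]
    rw [← Finset.add_sum_erase _ _ hjmem, ← Finset.add_sum_erase _ _ hymem]
    have hrest : ∑ i ∈ ((Finset.univ.erase m).erase j).erase y,
        (if i ∈ F then deriv φ (τ m - τ i) * (c m - c i) else 0) = 0 := by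
      refine Finset.sum_eq_zero fun i hi => ?_
      have hiy : i ≠ y := (Finset.mem_erase.1 hi).1
      have hij : i ≠ j := (Finset.mem_erase.1 ((Finset.mem_erase.1 hi).2)).1
      rw [hc0 i hiy hij, hcm]
      simp
    rw [hrest, if_pos hjF, if_pos hyF, hτj, hτy, hcj, hcy, hcm]
    ring
  have hΛ0exp : ∀ m, Λ m 0 = ∑ i ∈ Finset.univ.erase m,
      (if i ∈ F then φ (τ m - τ i) else 0) := by
    intro m
    simp only [hΛdef]
    exact Finset.sum_congr rfl fun i _ => by split_ifs <;> simp
  have hΛ00 : Λ y 0 = Λ j 0 := by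
    have hy0 : Λ y 0 = ∑ i ∈ Finset.univ.erase y, (if i ∈ F then φ (- τ i) else 0) := by
      rw [hΛ0exp y]
      exact Finset.sum_congr rfl fun i _ => by rw [hτy, zero_sub]
    have hj0 : Λ j 0 = ∑ i ∈ Finset.univ.erase j, (if i ∈ F then φ (- τ i) else 0) := by
      rw [hΛ0exp j]
      exact Finset.sum_congr rfl fun i _ => by rw [hτj, zero_sub]
    have h1 := Finset.sum_erase_add Finset.univ
      (fun i => if i ∈ F then φ (- τ i) else 0) (Finset.mem_univ y)
    have h2 := Finset.sum_erase_add Finset.univ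
      (fun i => if i ∈ F then φ (- τ i) else 0) (Finset.mem_univ j)
    have h3 : (if y ∈ F then φ (- τ y) else 0) = (if j ∈ F then φ (- τ j) else 0) := by
      rw [if_pos hyF, if_pos hjF, hτy, hτj]
    rw [hy0, hj0]
    linarith
  have hymem' : y ∈ Finset.univ.erase j := Finset.mem_erase.2 ⟨hyj, Finset.mem_univ y⟩
  have hjmem' : j ∈ Finset.univ.erase y := Finset.mem_erase.2 ⟨Ne.symm hyj, Finset.mem_univ j⟩
  have hΛdj : Λd j = deriv φ 0 * 2 + ∑ i ∈ (Finset.univ.erase j).erase y,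
      (if i ∈ F then deriv φ (- τ i) * (1 - c i) else 0) := by
    simp only [hΛddef]
    rw [← Finset.add_sum_erase _ _ hymem']
    congr 1
    · rw [if_pos hyF, hτj, hτy, hcj, hcy]
      ring
    · refine Finset.sum_congr rfl fun i _ => ?_
      rw [hτj, hcj, zero_sub]
  have hΛdy : Λd y = deriv φ 0 * (-2) + ∑ i ∈ (Finset.univ.erase j).erase y,
      (if i ∈ F then deriv φ (- τ i) * (-(1 - c i)) else 0) := by
    simp only [hΛddef]
    rw [← Finset.add_sum_erase _ _ hjmem', Finset.erase_right_comm]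
    congr 1
    · rw [if_pos hjF, hτy, hτj, hcy, hcj]
      ring
    · refine Finset.sum_congr rfl fun i hi => ?_
      have hiy : i ≠ y := (Finset.mem_erase.1 hi).1
      have hij : i ≠ j := (Finset.mem_erase.1 ((Finset.mem_erase.1 hi).2)).1
      rw [hτy, hcy, hc0 i hiy hij, zero_sub]
      split_ifs <;> ring
  have hΛdyj : Λd y = - Λd j := by
    rw [hΛdy, hΛdj, neg_add]
    congr 1
    · ring
    · rw [← Finset.sum_neg_distrib]
      exact Finset.sum_congr rfl fun i _ => by split_ifs <;> ring
  have hΛdjneg : Λd j < 0 := by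
    rw [hΛdj]
    have hrest : ∑ i ∈ (Finset.univ.erase j).erase y,
        (if i ∈ F then deriv φ (- τ i) * (1 - c i) else 0) ≤ 0 := by
      refine Finset.sum_nonpos fun i hi => ?_
      have hiy : i ≠ y := (Finset.mem_erase.1 hi).1
      have hij : i ≠ j := (Finset.mem_erase.1 ((Finset.mem_erase.1 hi).2)).1
      rw [hc0 i hiy hij]
      split_ifs with h
      · have := hφ' (- τ i)
        nlinarith
      · exact le_rfl
    linarith [hφ'0]
  have hγpos : 0 < deriv γ (Λ j 0) := by
    refine hγ' _ ?_
    rw [hΛ0exp j]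
    refine Finset.sum_nonneg fun i _ => ?_
    split_ifs
    · exact hφ0 _
    · exact le_rfl
  have hjFm : j ∈ F.erase y := Finset.mem_erase.2 ⟨Ne.symm hyj, hjF⟩
  have hsplit : (∑ m ∈ F, p m * (deriv γ (Λ m 0) * Λd m))
      = p y * (deriv γ (Λ y 0) * Λd y) + (p j * (deriv γ (Λ j 0) * Λd j)
        + ∑ m ∈ (F.erase y).erase j, p m * (deriv γ (Λ m 0) * Λd m)) := by
    rw [← Finset.add_sum_erase _ _ hyF, ← Finset.add_sum_erase _ _ hjFm]
  have hrest0 : ∑ m ∈ (F.erase y).erase j, p m * (deriv γ (Λ m 0) * Λd m) = 0 := by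
    refine Finset.sum_eq_zero fun m hm => ?_
    have hmj : m ≠ j := (Finset.mem_erase.1 hm).1
    have hmy : m ≠ y := (Finset.mem_erase.1 ((Finset.mem_erase.1 hm).2)).1
    have hmF : m ∈ F := (Finset.mem_erase.1 ((Finset.mem_erase.1 hm).2)).2
    rw [hΛd0 m hmF hmy hmj]
    ring
  have hfinal : (∑ m ∈ F, p m * (deriv γ (Λ m 0) * Λd m)) < 0 := by
    rw [hsplit, hrest0, hΛ00, hΛdyj]
    have h8 : p y * (deriv γ (Λ j 0) * - Λd j) + (p j * (deriv γ (Λ j 0) * Λd j) + 0)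
        = (p j - p y) * (deriv γ (Λ j 0) * Λd j) := by ring
    rw [h8]
    exact mul_neg_of_pos_of_neg (sub_pos.2 hpyj) (mul_neg_of_pos_of_neg hγpos hΛdjneg)
  rw [hD0] at hfinal
  exact lt_irrefl 0 hfinal
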